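/- Let f : [0,T] → ℝ be continuous with f(0) < a. Suppose that f(r ∧ τ̄_a(f)) = f(r ∧ τ̲_a(f)) for every rational r ∈ [0,T], and that τ̲_a(f) < τ̄_a(f). Then f(t) = a for every t ∈ [τ̲_a(f), τ̄_a(f)]; in particular there exist rationals 0 ≤ s < r ≤ T such that f is identically equal to a on [s, r]. -/
import Mathlib


open Set

/-- Lower hitting time `τ̲_a(f) = inf{t ∈ [0,T] : f(t) ≥ a} ∧ T` (with `inf ∅ = +∞`). -/
noncomputable def tauLow (T : ℝ) (f : ℝ → ℝ) (a : ℝ) : ℝ :=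
  sInf ({s ∈ Set.Icc (0 : ℝ) T | a ≤ f s} ∪ {T})

/-- Upper hitting time `τ̄_a(f) = inf{t ∈ [0,T] : f(t) > a} ∧ T` (with `inf ∅ = +∞`). -/
noncomputable def tauUp (T : ℝ) (f : ℝ → ℝ) (a : ℝ) : ℝ :=
  sInf ({s ∈ Set.Icc (0 : ℝ) T | a < f s} ∪ {T})

theorem stmt_12 (T : ℝ) (hT : 0 < T) (f : ℝ → ℝ)
    (hf : ContinuousOn f (Set.Icc 0 T))
    (a : ℝ) (h0 : f 0 < a)
    (hrat : ∀ r : ℚ, (r : ℝ) ∈ Set.Icc (0 : ℝ) T →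
      f (min (r : ℝ) (tauUp T f a)) = f (min (r : ℝ) (tauLow T f a)))
    (hlt : tauLow T f a < tauUp T f a) :
    (∀ t ∈ Set.Icc (tauLow T f a) (tauUp T f a), f t = a) ∧
      ∃ s r : ℚ, 0 ≤ (s : ℝ) ∧ (s : ℝ) < (r : ℝ) ∧ (r : ℝ) ≤ T ∧
        ∀ t ∈ Set.Icc (s : ℝ) (r : ℝ), f t = a := by
  set τl := tauLow T f a with hτl
  set τu := tauUp T f a with hτu
  have hTmeml : T ∈ ({s ∈ Set.Icc (0:ℝ) T | a ≤ f s} ∪ {T}) := Or.inr rfl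
  have hTmemu : T ∈ ({s ∈ Set.Icc (0:ℝ) T | a < f s} ∪ {T}) := Or.inr rfl
  have hlbl : ∀ x ∈ ({s ∈ Set.Icc (0:ℝ) T | a ≤ f s} ∪ {T}), (0:ℝ) ≤ x := by
    rintro x (⟨⟨hx, _⟩, _⟩ | rfl)
    · exact hx
    · exact hT.le
  have hlbu : ∀ x ∈ ({s ∈ Set.Icc (0:ℝ) T | a < f s} ∪ {T}), (0:ℝ) ≤ x := by
    rintro x (⟨⟨hx, _⟩, _⟩ | rfl)
    · exact hx
    · exact hT.le
  have hbddl : BddBelow ({s ∈ Set.Icc (0:ℝ) T | a ≤ f s} ∪ {T}) := ⟨0, hlbl⟩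
  have hbddu : BddBelow ({s ∈ Set.Icc (0:ℝ) T | a < f s} ∪ {T}) := ⟨0, hlbu⟩
  have hl0 : 0 ≤ τl := le_csInf ⟨T, hTmeml⟩ hlbl
  have huT : τu ≤ T := csInf_le hbddu hTmemu
  have hlT : τl < T := lt_of_lt_of_le hlt huT
  -- below τu, f ≤ a
  have key2 : ∀ t, 0 ≤ t → t < τu → f t ≤ a := by
    intro t ht0 htu
    by_contra h
    push_neg at h
    have : τu ≤ t := csInf_le hbddu (Or.inl ⟨⟨ht0, htu.le.trans huT⟩, h⟩)
    exact absurd htu (not_lt.mpr this)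
  -- below τl, f < a
  have key1 : ∀ t, 0 ≤ t → t < τl → f t < a := by
    intro t ht0 htl
    by_contra h
    push_neg at h
    have : τl ≤ t := csInf_le hbddl (Or.inl ⟨⟨ht0, (htl.trans hlT).le⟩, h⟩)
    exact absurd htl (not_lt.mpr this)
  -- rational points of [τl, τu] take value f τl
  have hq : ∀ q : ℚ, τl ≤ (q:ℝ) → (q:ℝ) ≤ τu → f q = f τl := by
    intro q h1 h2
    have hmem : (q:ℝ) ∈ Set.Icc (0:ℝ) T := ⟨hl0.trans h1, h2.trans huT⟩
    have := hrat q hmem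
    rwa [min_eq_left h2, min_eq_right h1] at this
  have hsub : Set.Icc τl τu ⊆ Set.Icc (0:ℝ) T := Set.Icc_subset_Icc hl0 huT
  -- f is constant (= f τl) on [τl, τu]
  have keyEq : ∀ t ∈ Set.Icc τl τu, f t = f τl := by
    have hclosed : IsClosed (Set.Icc τl τu ∩ f ⁻¹' {f τl}) :=
      (hf.mono hsub).preimage_isClosed_of_isClosed isClosed_Icc isClosed_singleton
    have hsub2 : Set.Ioo τl τu ∩ Set.range ((↑) : ℚ → ℝ) ⊆
        Set.Icc τl τu ∩ f ⁻¹' {f τl} := by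
      rintro x ⟨hx, q, rfl⟩
      exact ⟨⟨hx.1.le, hx.2.le⟩, hq q hx.1.le hx.2.le⟩
    have hdense : Set.Ioo τl τu ⊆ closure (Set.Icc τl τu ∩ f ⁻¹' {f τl}) :=
      fun x hx => closure_mono hsub2 (Rat.denseRange_cast.open_subset_closure_inter isOpen_Ioo hx)
    have h1 : closure (Set.Ioo τl τu) ⊆ Set.Icc τl τu ∩ f ⁻¹' {f τl} :=
      (closure_minimal hdense isClosed_closure).trans hclosed.closure_subset
    have : Set.Icc τl τu ⊆ Set.Icc τl τu ∩ f ⁻¹' {f τl} :=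
      (closure_Ioo hlt.ne).symm.subset.trans h1
    intro t ht
    exact (this ht).2
  -- value at τl is ≤ a
  have hca : f τl ≤ a := key2 τl hl0 hlt
  -- value at τl is ≥ a
  have hac : a ≤ f τl := by
    by_contra h
    push_neg at h
    have : τu ≤ τl := by
      apply le_csInf ⟨T, hTmeml⟩
      rintro x (⟨hx1, hx2⟩ | rfl)
      · by_contra hxu
        push_neg at hxu
        rcases lt_or_ge x τl with hxl | hxl
        · exact absurd hx2 (not_le.mpr (key1 x hx1.1 hxl))
        · have := keyEq x ⟨hxl, hxu.le⟩
          rw [this] at hx2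
          exact absurd hx2 (not_le.mpr h)
      · exact huT
    exact absurd hlt (not_lt.mpr this)
  have hfa : f τl = a := le_antisymm hca hac
  have main : ∀ t ∈ Set.Icc τl τu, f t = a := fun t ht => (keyEq t ht).trans hfa
  refine ⟨main, ?_⟩
  obtain ⟨s, hs1, hs2⟩ := exists_rat_btwn hlt
  obtain ⟨r, hr1, hr2⟩ := exists_rat_btwn hs2
  refine ⟨s, r, hl0.trans hs1.le, by exact_mod_cast hr1, hr2.le.trans huT, ?_⟩
  intro t ht
  exact main t ⟨hs1.le.trans ht.1, ht.2.trans hr2.le⟩
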